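/- arXiv:2210.13309 — 6 statements merged into one kernel-verified Lean document; each statement's English description precedes it below -/
import Mathlib

section
/- Let t⁽¹⁾, …, t⁽ᵏ⁾ ∈ ℝ^ℓ be probability vectors (entries nonnegative, summing to 1). Then there exists N ∈ ℕ and a probability vector a ∈ ℝ^N such that for each 1 ≤ j ≤ k there is a partition Y₁ ∪ ⋯ ∪ Y_ℓ of {1,…,N} with ∑_{p ∈ Y_i} a_p = t_i⁽ʲ⁾ for all 1 ≤ i ≤ ℓ. -/
open Finset

theorem stmt_0 (k ℓ : ℕ) (t : Fin k → Fin ℓ → ℝ)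
    (ht_nonneg : ∀ j i, 0 ≤ t j i) (ht_sum : ∀ j, ∑ i, t j i = 1) :
    ∃ (N : ℕ) (a : Fin N → ℝ),
      (∀ p, 0 ≤ a p) ∧ (∑ p, a p = 1) ∧
      ∀ j : Fin k, ∃ Y : Fin ℓ → Finset (Fin N),
        (∀ i i', i ≠ i' → Disjoint (Y i) (Y i')) ∧
        (Finset.univ.biUnion Y = Finset.univ) ∧
        (∀ i : Fin ℓ, ∑ p ∈ Y i, a p = t j i) := by
  classical
  set N := Fintype.card (Fin k → Fin ℓ) with hN
  let e : Fin N ≃ (Fin k → Fin ℓ) := (Fintype.equivFin (Fin k → Fin ℓ)).symm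
  refine ⟨N, fun p => ∏ j, t j (e p j), fun p => Finset.prod_nonneg fun j _ => ht_nonneg _ _,
    ?_, ?_⟩
  · show (∑ p : Fin N, ∏ j, t j (e p j)) = 1
    rw [Equiv.sum_comp e (fun f => ∏ j, t j (f j)), ← Fintype.prod_sum]
    simp [ht_sum]
  · intro j
    refine ⟨fun i => univ.filter (fun p => e p j = i), ?_, ?_, ?_⟩
    · intro i i' hii'
      simp only [Finset.disjoint_filter]
      intro p _ h h'
      exact hii' (h ▸ h')
    · ext p
      simp only [Finset.mem_biUnion, Finset.mem_univ, Finset.mem_filter, true_and, iff_true]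
      exact ⟨e p j, rfl⟩
    · intro i
      have key : ∑ p, (if e p j = i then ∏ j', t j' (e p j') else 0) = t j i := by
        rw [show (∑ p : Fin N, if e p j = i then ∏ j', t j' (e p j') else 0) = ∑ f : Fin k → Fin ℓ, (if f j = i then ∏ j', t j' (f j') else 0) from Equiv.sum_comp e (fun f => if f j = i then ∏ j', t j' (f j') else 0)]
        have : ∀ f : Fin k → Fin ℓ,
            (if f j = i then ∏ j', t j' (f j') else 0)
            = ∏ j', (if j' = j then (if f j' = i then t j' (f j') else 0) else t j' (f j')) := by
          intro f
          by_cases h : f j = i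
          · simp only [h, if_true]
            refine Finset.prod_congr rfl fun j' _ => ?_
            by_cases hj : j' = j
            · subst hj; simp [h]
            · simp [hj]
          · simp only [h, if_false]
            refine (Finset.prod_eq_zero (Finset.mem_univ j) ?_).symm
            simp [h]
        rw [Finset.sum_congr rfl fun f _ => this f, ← Fintype.prod_sum (fun j' (x : Fin ℓ) => if j' = j then (if x = i then t j' x else 0) else t j' x)]
        have : ∀ j' : Fin k, (∑ x : Fin ℓ,
            (if j' = j then (if x = i then t j' x else 0) else t j' x))
            = if j' = j then t j' i else 1 := by
          intro j'
          by_cases hj : j' = j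
          · simp [hj, Finset.sum_ite_eq']
          · simp [hj, ht_sum]
        rw [Finset.prod_congr rfl fun j' _ => this j']
        simp
      rw [← key, Finset.sum_filter]
end

section
/- The 3×3 matrix (1/2)·[[1,0,1],[1,1,0],[0,1,1]] is doubly stochastic but not unistochastic. -/
open Matrix

def IsDoublyStochastic {n : ℕ} (X : Matrix (Fin n) (Fin n) ℝ) : Prop :=
  (∀ i j, 0 ≤ X i j) ∧ (∀ i, ∑ j, X i j = 1) ∧ (∀ j, ∑ i, X i j = 1)

def IsUnistochastic {n : ℕ} (X : Matrix (Fin n) (Fin n) ℝ) : Prop :=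
  ∃ U : Matrix (Fin n) (Fin n) ℂ, Uᴴ * U = 1 ∧ U * Uᴴ = 1 ∧
    ∀ i j, X i j = ‖U i j‖^2

theorem stmt_1 :
    IsDoublyStochastic ((1/2 : ℝ) • !![1,0,1;1,1,0;0,1,1]) ∧
    ¬ IsUnistochastic ((1/2 : ℝ) • !![1,0,1;1,1,0;0,1,1]) := by
  constructor
  · refine ⟨?_, ?_, ?_⟩
    · intro i j
      fin_cases i <;> fin_cases j <;> norm_num [Matrix.smul_apply]
    · intro i
      fin_cases i <;> simp [Fin.sum_univ_three, Matrix.smul_apply] <;> norm_num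
    · intro j
      fin_cases j <;> norm_num [Fin.sum_univ_three, Matrix.smul_apply, Matrix.vecHead, Matrix.vecTail] <;> simp <;> norm_num
  · rintro ⟨U, -, hUU, h⟩
    have h01 : U 0 1 = 0 := by
      have := h 0 1
      simp [Matrix.smul_apply] at this
      have := this.symm
      rwa [pow_eq_zero_iff (by norm_num), norm_eq_zero] at this
    have h12 : U 1 2 = 0 := by
      have := h 1 2
      simp [Matrix.smul_apply] at this
      have := this.symm
      rwa [pow_eq_zero_iff (by norm_num), norm_eq_zero] at this
    have h00 : U 0 0 ≠ 0 := by
      intro hz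
      have := h 0 0
      rw [hz] at this
      simp [Matrix.smul_apply] at this
    have h10 : U 1 0 ≠ 0 := by
      intro hz
      have := h 1 0
      rw [hz] at this
      simp [Matrix.smul_apply] at this
    have key := congrFun (congrFun hUU 0) 1
    rw [Matrix.mul_apply] at key
    simp [Fin.sum_univ_three, Matrix.conjTranspose_apply, h01, h12,
      Matrix.one_apply] at key
    rcases key with hk | hk
    · exact h00 hk
    · exact h10 (by simpa using congrArg (starRingEnd ℂ) hk)
end

section
/- There is no continuous function f : [-1,1] → [0,1] such that the doubly stochastic matrix Y(x) = [[f(x), 1−f(x)],[1−f(x), f(x)]] satisfies Y(x)·(|x|, −|x|)ᵀ = (x, −x)ᵀ for all x ∈ [-1,1]. -/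
open Matrix

theorem stmt_3 :
    ¬ ∃ f : ℝ → ℝ, ContinuousOn f (Set.Icc (-1 : ℝ) 1) ∧
      (∀ x ∈ Set.Icc (-1 : ℝ) 1, f x ∈ Set.Icc (0 : ℝ) 1) ∧
      (∀ x ∈ Set.Icc (-1 : ℝ) 1,
        (!![f x, 1 - f x; 1 - f x, f x]) *ᵥ ![|x|, -|x|] = ![x, -x]) := by
  rintro ⟨f, hcont, _hbd, heq⟩
  have key : ∀ x ∈ Set.Icc (-1 : ℝ) 1, (2 * f x - 1) * |x| = x := by
    intro x hx
    have h := congrFun (heq x hx) 0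
    simp [Matrix.mulVec, dotProduct, Fin.sum_univ_two] at h
    nlinarith [h]
  have hpos : ∀ x ∈ Set.Icc (-1 : ℝ) 1, 0 < x → f x = 1 := by
    intro x hx hx0
    have h := key x hx
    rw [abs_of_pos hx0] at h
    nlinarith
  have hneg : ∀ x ∈ Set.Icc (-1 : ℝ) 1, x < 0 → f x = 0 := by
    intro x hx hx0
    have h := key x hx
    rw [abs_of_neg hx0] at h
    nlinarith
  have h0 : (0 : ℝ) ∈ Set.Icc (-1 : ℝ) 1 := by norm_num
  have hc : ContinuousWithinAt f (Set.Icc (-1 : ℝ) 1) 0 := hcont 0 h0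
  have hupos : ∀ n : ℕ, (0 : ℝ) < 1 / (n + 1) := by intro n; positivity
  have humem : ∀ n : ℕ, (1 : ℝ) / (n + 1) ∈ Set.Icc (-1 : ℝ) 1 := by
    intro n
    refine ⟨by linarith [hupos n], ?_⟩
    rw [div_le_one (by positivity)]
    linarith [Nat.cast_nonneg (α := ℝ) n]
  have humemneg : ∀ n : ℕ, -((1 : ℝ) / (n + 1)) ∈ Set.Icc (-1 : ℝ) 1 := by
    intro n
    have := humem n
    simp only [Set.mem_Icc] at this ⊢
    constructor <;> linarith [this.1, this.2]
  have hu : Filter.Tendsto (fun n : ℕ => (1 : ℝ) / (n + 1)) Filter.atTop (nhds 0) :=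
    tendsto_one_div_add_atTop_nhds_zero_nat
  have huneg : Filter.Tendsto (fun n : ℕ => -((1 : ℝ) / (n + 1))) Filter.atTop (nhds 0) := by
    simpa using hu.neg
  have hin : Filter.Tendsto (fun n : ℕ => (1 : ℝ) / (n + 1)) Filter.atTop
      (nhdsWithin 0 (Set.Icc (-1 : ℝ) 1)) :=
    tendsto_nhdsWithin_of_tendsto_nhds_of_eventually_within _ hu
      (Filter.Eventually.of_forall humem)
  have hinneg : Filter.Tendsto (fun n : ℕ => -((1 : ℝ) / (n + 1))) Filter.atTop
      (nhdsWithin 0 (Set.Icc (-1 : ℝ) 1)) :=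
    tendsto_nhdsWithin_of_tendsto_nhds_of_eventually_within _ huneg
      (Filter.Eventually.of_forall humemneg)
  have t1 : Filter.Tendsto (fun n : ℕ => f (1 / (n + 1))) Filter.atTop (nhds (f 0)) :=
    hc.tendsto.comp hin
  have t2 : Filter.Tendsto (fun n : ℕ => f (-(1 / (n + 1)))) Filter.atTop (nhds (f 0)) :=
    hc.tendsto.comp hinneg
  have e1 : (fun n : ℕ => f (1 / (n + 1))) = fun _ => (1 : ℝ) := by
    funext n; exact hpos _ (humem n) (hupos n)
  have e2 : (fun n : ℕ => f (-(1 / (n + 1)))) = fun _ => (0 : ℝ) := by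
    funext n; exact hneg _ (humemneg n) (by linarith [hupos n])
  rw [e1] at t1
  rw [e2] at t2
  have h1 : f 0 = 1 := tendsto_nhds_unique t1 tendsto_const_nhds
  have h2 : f 0 = 0 := tendsto_nhds_unique t2 tendsto_const_nhds
  rw [h1] at h2
  norm_num at h2
end

section
/- Suppose X : [-1,1] → M₃(ℝ) is defined by X(x) = sin²(x)·I + cos²(x)·P where P is the cyclic permutation matrix sending e₁↦e₃, e₂↦e₁, e₃↦e₂ (so X(x) = [[sin²x, cos²x, 0],[0, sin²x, cos²x],[cos²x, 0, sin²x]]). Then X(x) is doubly stochastic for every x ∈ [-1,1], but X cannot be written as a finite convex combination ∑_{k=1}^ℓ t_k Q_k where each Q_k : [-1,1] → M₃(ℝ) is continuous with Q_k(x) unistochastic for all x, and (t₁,…,t_ℓ) is a probability vector. -/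
open Matrix

theorem stmt_6 (X : ℝ → Matrix (Fin 3) (Fin 3) ℝ)
    (hX : ∀ x, X x =
      !![Real.sin x ^ 2, Real.cos x ^ 2, 0;
         0, Real.sin x ^ 2, Real.cos x ^ 2;
         Real.cos x ^ 2, 0, Real.sin x ^ 2]) :
    (∀ x ∈ Set.Icc (-1 : ℝ) 1, IsDoublyStochastic (X x)) ∧
    ¬ ∃ (ℓ : ℕ) (t : Fin ℓ → ℝ) (U : Fin ℓ → ℝ → Matrix (Fin 3) (Fin 3) ℂ),
        (∀ k, 0 ≤ t k) ∧ (∑ k, t k = 1) ∧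
        (∀ k, ContinuousOn (U k) (Set.Icc (-1 : ℝ) 1)) ∧
        (∀ k, ∀ x ∈ Set.Icc (-1 : ℝ) 1, (U k x)ᴴ * U k x = 1) ∧
        (∀ x ∈ Set.Icc (-1 : ℝ) 1, ∀ i j,
          X x i j = ∑ k, t k * (‖U k x i j‖)^2) := by
  constructor
  · intro x _
    refine ⟨?_, ?_, ?_⟩
    · intro i j
      rw [hX]
      fin_cases i <;> fin_cases j <;> simp <;> positivity
    · intro i
      rw [hX]
      fin_cases i <;>
        simp [Fin.sum_univ_three]
    · intro j
      rw [hX]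
      fin_cases j <;>
        simp [Fin.sum_univ_three]
  · rintro ⟨ℓ, t, U, ht0, _ht1, hcont, hunit, heq⟩
    have hmem0 : (0:ℝ) ∈ Set.Icc (-1:ℝ) 1 := by norm_num
    have hmem1 : (1:ℝ) ∈ Set.Icc (-1:ℝ) 1 := by norm_num
    -- zero entries of X force zero entries of U k
    have hzero : ∀ x ∈ Set.Icc (-1:ℝ) 1, ∀ k, 0 < t k → ∀ (i j : Fin 3),
        X x i j = 0 → U k x i j = 0 := by
      intro x hx k hk i j hXij
      have h := heq x hx i j
      rw [hXij] at h
      have h0 := (Finset.sum_eq_zero_iff_of_nonneg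
        (fun k _ => mul_nonneg (ht0 k) (by positivity))).mp h.symm k (Finset.mem_univ k)
      rcases mul_eq_zero.mp h0 with h1 | h1
      · exact absurd h1 (ne_of_gt hk)
      · have := pow_eq_zero_iff (n := 2) (by norm_num) |>.mp h1
        exact norm_eq_zero.mp this
    -- the key dichotomy
    have hkey : ∀ x ∈ Set.Icc (-1:ℝ) 1, ∀ k, 0 < t k →
        ‖U k x 0 0‖ ^ 2 = 0 ∨ ‖U k x 0 0‖ ^ 2 = 1 := by
      intro x hx k hk
      have h02 : U k x 0 2 = 0 := hzero x hx k hk 0 2 (by rw [hX]; simp)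
      have h10 : U k x 1 0 = 0 := hzero x hx k hk 1 0 (by rw [hX]; simp)
      have h21 : U k x 2 1 = 0 := hzero x hx k hk 2 1 (by rw [hX]; simp)
      have hunitk := hunit k x hx
      have hcol := congrFun (congrFun hunitk 0) 1
      simp [Matrix.mul_apply, Matrix.conjTranspose_apply, Fin.sum_univ_three,
        h10, h21, Matrix.one_apply] at hcol
      -- hcol : U k x 0 0 = 0 ∨ U k x 0 1 = 0
      rcases hcol with h | h
      · left
        simp [h]
      · right
        have hrow : U k x * (U k x)ᴴ = 1 := mul_eq_one_comm.mp hunitk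
        have hr := congrFun (congrFun hrow 0) 0
        simp [Matrix.mul_apply, Matrix.conjTranspose_apply, Fin.sum_univ_three,
          h02, Matrix.one_apply, Complex.mul_conj] at hr
        have hr2 : Complex.normSq (U k x 0 0) + Complex.normSq (U k x 0 1) = 1 := by
          exact_mod_cast hr
        rw [h, Complex.normSq_zero] at hr2
        rw [Complex.sq_norm]
        linarith
    -- g k 0 = 0 for t k > 0
    have h000 : ∀ k, 0 < t k → ‖U k 0 0 0‖ ^ 2 = 0 := by
      intro k hk
      have h := heq 0 hmem0 0 0
      rw [hX] at h
      simp at h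
      have h0 := (Finset.sum_eq_zero_iff_of_nonneg
        (fun k _ => mul_nonneg (ht0 k) (by positivity))).mp h.symm k (Finset.mem_univ k)
      rcases mul_eq_zero.mp h0 with h1 | h1
      · exact absurd h1 (ne_of_gt hk)
      · exact h1
    -- g k 1 = 0 for t k > 0, by IVT
    have h100 : ∀ k, 0 < t k → ‖U k 1 0 0‖ ^ 2 = 0 := by
      intro k hk
      rcases hkey 1 hmem1 k hk with h | h
      · exact h
      · exfalso
        have hg : ContinuousOn (fun x => ‖U k x 0 0‖ ^ 2)
            (Set.Icc (-1:ℝ) 1) := by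
          have hc : Continuous fun M : Matrix (Fin 3) (Fin 3) ℂ =>
              ‖M 0 0‖ ^ 2 := by
            apply Continuous.pow
            exact continuous_norm.comp
              ((continuous_apply (0 : Fin 3)).comp (continuous_apply (0 : Fin 3)))
          exact hc.comp_continuousOn (hcont k)
        have hsub : Set.Icc (0:ℝ) 1 ⊆ Set.Icc (-1:ℝ) 1 :=
          Set.Icc_subset_Icc (by norm_num) le_rfl
        have hg' := hg.mono hsub
        have hIVT := intermediate_value_Icc (by norm_num : (0:ℝ) ≤ 1) hg'
        have hmem : (1/2 : ℝ) ∈ Set.Icc (‖U k 0 0 0‖ ^ 2)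
            (‖U k 1 0 0‖ ^ 2) := by
          rw [h000 k hk, h]; norm_num
        obtain ⟨x, hx, hgx⟩ := hIVT hmem
        have hgx' : ‖U k x 0 0‖ ^ 2 = 1/2 := hgx
        rcases hkey x (hsub hx) k hk with h' | h' <;>
          rw [h'] at hgx' <;> norm_num at hgx'
    -- conclude sin 1 ^ 2 = 0
    have h := heq 1 hmem1 0 0
    rw [hX] at h
    simp at h
    have hzero2 : ∑ k, t k * ‖U k 1 0 0‖ ^ 2 = 0 := by
      apply Finset.sum_eq_zero
      intro k _
      rcases lt_or_eq_of_le (ht0 k) with hk | hk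
      · rw [h100 k hk]; ring
      · rw [← hk]; ring
    rw [hzero2] at h
    have hs : Real.sin 1 > 0 :=
      Real.sin_pos_of_pos_of_lt_pi (by norm_num) (by linarith [Real.pi_gt_three])
    nlinarith
end

section
/- Let A = (A_k)_{k≥1} and B = (B_k)_{k≥1} be bounded sequences of self-adjoint n×n complex matrices such that for every k there exists a doubly stochastic matrix X_k with X_k·λ(B_k) = λ(A_k). Then there exist unitaries U₁, …, U_{2^{n−1}} in ℓ_∞(ℕ, M_n(ℂ)) (i.e., bounded sequences of unitary matrices) such that A = ∑_{i=1}^{2^{n−1}} (1/2^{n−1}) U_i* B U_i, where operations are taken coordinatewise. -/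
open Matrix

namespace Stmt12

open BigOperators Finset

variable {m : ℕ}


variable {m : ℕ}

lemma sum_eq_pair {α} [AddCommMonoid α] {p q : Fin m} (h : p ≠ q) (f : Fin m → α)
    (hf : ∀ k, k ≠ p → k ≠ q → f k = 0) : ∑ k, f k = f p + f q := by
  rw [← Finset.sum_subset (Finset.subset_univ ({p, q} : Finset (Fin m)))]
  · rw [Finset.sum_pair h]
  · intro k _ hk
    simp only [Finset.mem_insert, Finset.mem_singleton, not_or] at hk
    exact hf k hk.1 hk.2

lemma sum_eq_one {α} [AddCommMonoid α] (p : Fin m) (f : Fin m → α)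
    (hf : ∀ k, k ≠ p → f k = 0) : ∑ k, f k = f p :=
  Finset.sum_eq_single_of_mem p (Finset.mem_univ p) (fun k _ hk => hf k hk)

/-- permutation matrix -/
def permM (σ : Equiv.Perm (Fin m)) : Matrix (Fin m) (Fin m) ℂ :=
  Matrix.of fun i j => if σ i = j then 1 else 0

lemma permM_unitary (σ : Equiv.Perm (Fin m)) : (permM σ)ᴴ * permM σ = 1 := by
  ext i j
  rw [Matrix.mul_apply]
  rw [sum_eq_one (σ.symm i) _ (fun k hk => ?_)]
  · simp [permM, conjTranspose_apply, Matrix.one_apply, Equiv.apply_symm_apply,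
      Equiv.eq_symm_apply]
  · have : σ k ≠ i := fun hc => hk (by simp [← hc])
    simp [permM, conjTranspose_apply, this]

lemma permM_conj (σ : Equiv.Perm (Fin m)) (g : Fin m → ℂ) :
    (permM σ)ᴴ * diagonal g * permM σ = diagonal (fun i => g (σ.symm i)) := by
  ext i j
  rw [Matrix.mul_apply]
  have hcol : ∀ k, ((permM σ)ᴴ * diagonal g) i k = if σ.symm i = k then g (σ.symm i) else 0 := by
    intro k
    rw [Matrix.mul_apply]
    rw [sum_eq_one (σ.symm i) _ (fun l hl => ?_)]
    · simp [permM, conjTranspose_apply, diagonal_apply, Equiv.apply_symm_apply]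
    · have : σ l ≠ i := fun hc => hl (by simp [← hc])
      simp [permM, conjTranspose_apply, this]
  simp_rw [hcol]
  rw [sum_eq_one (σ.symm i) _ (fun k hk => by simp [Ne.symm hk])]
  simp [permM, diagonal_apply, Equiv.symm_apply_eq]

def rot (p q : Fin m) (si co ε : ℝ) : Matrix (Fin m) (Fin m) ℂ :=
  Matrix.of fun k l =>
    if k = p then (if l = p then (si : ℂ) else if l = q then -((ε : ℂ) * co) else 0)
    else if k = q then (if l = p then (ε : ℂ) * co else if l = q then (si : ℂ) else 0)
    else if l = k then 1 else 0

lemma rot_conj {p q : Fin m} (hpq : p ≠ q) (si co ε : ℝ) (g : Fin m → ℂ) :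
    (rot p q si co ε)ᴴ * diagonal g * rot p q si co ε =
    Matrix.of fun i j =>
      if i = p ∧ j = p then (si : ℂ)^2 * g p + (ε : ℂ)^2 * (co : ℂ)^2 * g q
      else if i = p ∧ j = q then (ε : ℂ) * si * co * (g q - g p)
      else if i = q ∧ j = p then (ε : ℂ) * si * co * (g q - g p)
      else if i = q ∧ j = q then (ε : ℂ)^2 * (co : ℂ)^2 * g p + (si : ℂ)^2 * g q
      else if i = j then g i else 0 := by
  ext i j
  have hM : ((rot p q si co ε)ᴴ * diagonal g * rot p q si co ε) i j
      = ∑ k, star (rot p q si co ε k i) * (g k * rot p q si co ε k j) := by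
    rw [Matrix.mul_assoc, Matrix.mul_apply]
    simp only [conjTranspose_apply, diagonal_mul]
  rw [hM]
  have hzero : ∀ i', (i' = p ∨ i' = q) → ∀ k, k ≠ p → k ≠ q →
      star (rot p q si co ε k i') * (g k * rot p q si co ε k j) = 0 := by
    intro i' hipq k hk1 hk2
    have h0 : rot p q si co ε k i' = 0 := by
      rcases hipq with h | h <;> subst h <;>
        simp [rot, hk1, hk2, Ne.symm hk1, Ne.symm hk2]
    simp [h0]
  by_cases hi : i = p
  · subst hi
    rw [sum_eq_pair hpq _ (hzero i (Or.inl rfl))]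
    by_cases hj : j = i
    · simp [rot, hpq, Ne.symm hpq, hj, Complex.star_def, map_neg, Complex.conj_ofReal,
        Matrix.of_apply]
      push_cast; ring
    · by_cases hj' : j = q
      · simp [rot, hpq, Ne.symm hpq, hj', Ne.symm hpq, Complex.star_def, map_neg,
          Complex.conj_ofReal, Matrix.of_apply]
        push_cast; ring
      · simp [rot, hpq, Ne.symm hpq, hj, hj', Ne.symm hj, Ne.symm hj',
          (show ¬ i = j from fun h => hj h.symm), Complex.star_def, map_neg,
          Complex.conj_ofReal, Matrix.of_apply]
  · by_cases hi' : i = q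
    · subst hi'
      rw [sum_eq_pair hpq _ (hzero i (Or.inr rfl))]
      by_cases hj : j = p
      · simp [rot, hpq, Ne.symm hpq, hj, hi, Complex.star_def, map_neg, Complex.conj_ofReal,
          Matrix.of_apply]
        push_cast; ring
      · by_cases hj' : j = i
        · simp [rot, hpq, Ne.symm hpq, hj', hi, Complex.star_def, map_neg, Complex.conj_ofReal,
            Matrix.of_apply]
          push_cast; ring
        · simp [rot, hpq, Ne.symm hpq, hj, hj', hi, Ne.symm hj, Ne.symm hj',
            (show ¬ i = j from fun h => hj' h.symm), Complex.star_def, map_neg,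
            Complex.conj_ofReal, Matrix.of_apply]
    · rw [sum_eq_one i _ (fun k hk => ?_)]
      · have h1 : rot p q si co ε i i = 1 := by simp [rot, hi, hi']
        have h2 : rot p q si co ε i j = if i = j then 1 else 0 := by
          by_cases h : i = j
          · subst h; simp [rot, hi, hi']
          · simp [rot, hi, hi', Ne.symm h, h]
        rw [h1, h2]
        simp only [Matrix.of_apply, hi, hi', false_and, and_false, if_false, if_neg hi,
          if_neg hi']
        by_cases h : i = j <;> simp [h]
      · have h0 : rot p q si co ε k i = 0 := by
          by_cases hk1 : k = p
          · subst hk1; simp [rot, hi, hi']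
          · by_cases hk2 : k = q
            · subst hk2; simp [rot, hi, hi', hk1]
            · simp [rot, hk1, hk2, Ne.symm hk]
        simp [h0]

lemma rot_unitary {p q : Fin m} (hpq : p ≠ q) (si co : ℝ) (hsc : si^2 + co^2 = 1)
    (ε : ℝ) (hε : ε^2 = 1) : (rot p q si co ε)ᴴ * rot p q si co ε = 1 := by
  have h := rot_conj hpq si co ε (fun _ => (1 : ℂ))
  rw [diagonal_one, Matrix.mul_one] at h
  rw [h]
  have hε' : (ε : ℂ)^2 = 1 := by exact_mod_cast hε
  have hsc' : (si : ℂ)^2 + (co : ℂ)^2 = 1 := by exact_mod_cast hsc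
  ext i j
  simp only [Matrix.of_apply, Matrix.one_apply]
  by_cases hi : i = p
  · by_cases hj : j = p
    · rw [if_pos ⟨hi, hj⟩, if_pos (hi.trans hj.symm)]
      show (si : ℂ)^2 * 1 + (ε : ℂ)^2 * (co : ℂ)^2 * 1 = 1
      linear_combination hsc' + (co : ℂ)^2 * hε'
    · have hij : ¬ i = j := fun hc => hj (hc ▸ hi)
      by_cases hj' : j = q
      · rw [if_neg (fun hc => hj hc.2), if_pos ⟨hi, hj'⟩, if_neg hij]
        show (ε : ℂ) * si * co * (1 - 1) = 0
        ring
      · rw [if_neg (fun hc => hj hc.2), if_neg (fun hc => hj' hc.2),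
          if_neg (fun hc => hj hc.2), if_neg (fun hc => hj' hc.2), if_neg hij]
  · by_cases hi' : i = q
    · by_cases hj : j = p
      · have hij : ¬ i = j := fun hc => hi (hc ▸ hj)
        rw [if_neg (fun hc => hi hc.1), if_neg (fun hc => hi hc.1), if_pos ⟨hi', hj⟩,
          if_neg hij]
        show (ε : ℂ) * si * co * (1 - 1) = 0
        ring
      · by_cases hj' : j = q
        · rw [if_neg (fun hc => hi hc.1), if_neg (fun hc => hi hc.1),
            if_neg (fun hc => hj hc.2), if_pos ⟨hi', hj'⟩, if_pos (hi'.trans hj'.symm)]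
          show (ε : ℂ)^2 * (co : ℂ)^2 * 1 + (si : ℂ)^2 * 1 = 1
          linear_combination hsc' + (co : ℂ)^2 * hε'
        · have hij : ¬ i = j := fun hc => hj' (hc ▸ hi')
          rw [if_neg (fun hc => hi hc.1), if_neg (fun hc => hi hc.1),
            if_neg (fun hc => hj hc.2), if_neg (fun hc => hj' hc.2), if_neg hij]
    · rw [if_neg (fun hc => hi hc.1), if_neg (fun hc => hi hc.1),
        if_neg (fun hc => hi' hc.1), if_neg (fun hc => hi' hc.1)]

lemma rot_avg {p q : Fin m} (hpq : p ≠ q) (si co : ℝ) (g : Fin m → ℂ) :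
    (2 : ℂ)⁻¹ • ((rot p q si co 1)ᴴ * diagonal g * rot p q si co 1
      + (rot p q si co (-1))ᴴ * diagonal g * rot p q si co (-1)) =
    diagonal (fun i => if i = p then (si : ℂ)^2 * g p + (co : ℂ)^2 * g q
      else if i = q then (co : ℂ)^2 * g p + (si : ℂ)^2 * g q else g i) := by
  rw [rot_conj hpq, rot_conj hpq]
  ext i j
  simp only [Matrix.smul_apply, Matrix.add_apply, Matrix.of_apply, diagonal_apply]
  by_cases hi : i = p <;> by_cases hj : j = p <;>
    by_cases hi' : i = q <;> by_cases hj' : j = q <;>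
      simp_all <;> push_cast <;> ring_nf <;> try simp [Ne.symm hj, Ne.symm hj']
  all_goals (try { intro h; exact absurd h.symm (by assumption) })

def MajOn (s : Finset (Fin m)) (x y : Fin m → ℝ) : Prop :=
  (∑ i ∈ s, x i = ∑ i ∈ s, y i) ∧
  ∀ t ⊆ s, ∃ t' ⊆ s, t'.card = t.card ∧ ∑ i ∈ t, x i ≤ ∑ i ∈ t', y i

lemma combo (y : Fin m → ℝ) (c : Fin m → ℝ) (h0 : ∀ j, 0 ≤ c j) (h1 : ∀ j, c j ≤ 1)
    (k : ℕ) (hk : ∑ j, c j = k) :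
    ∃ t' : Finset (Fin m), t'.card = k ∧ ∑ j, c j * y j ≤ ∑ j ∈ t', y j := by
  rcases Nat.eq_zero_or_pos k with hk0 | hkpos
  · subst hk0
    have hc0 : ∀ j ∈ Finset.univ, c j = 0 := by
      intro j _
      have := (Finset.sum_eq_zero_iff_of_nonneg (fun j _ => h0 j)).mp (by simpa using hk)
      exact this j (Finset.mem_univ j)
    refine ⟨∅, by simp, ?_⟩
    rw [Finset.sum_eq_zero (fun j hj => by rw [hc0 j hj, zero_mul])]
    simp
  · have hkm : k ≤ m := by
      have h1' : ∑ j, c j ≤ ∑ _j : Fin m, (1 : ℝ) := Finset.sum_le_sum (fun j _ => h1 j)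
      rw [hk] at h1'
      simp only [Finset.sum_const, Finset.card_univ, Fintype.card_fin, nsmul_eq_mul,
        mul_one] at h1'
      exact_mod_cast h1'
    have hne : (Finset.univ.powersetCard k : Finset (Finset (Fin m))).Nonempty := by
      apply Finset.powersetCard_nonempty.mpr
      simpa using hkm
    obtain ⟨t', ht'mem, ht'max⟩ := Finset.exists_max_image _ (fun t => ∑ j ∈ t, y j) hne
    have ht'card : t'.card = k := (Finset.mem_powersetCard.mp ht'mem).2
    have ht'ne : t'.Nonempty := Finset.card_pos.mp (ht'card ▸ hkpos)
    obtain ⟨i₀, hi₀t, hi₀min⟩ := t'.exists_min_image y ht'ne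
    set τ := y i₀ with hτ
    have hout : ∀ j, j ∉ t' → y j ≤ τ := by
      intro j hj
      by_contra hlt
      push_neg at hlt
      have hmem : insert j (t'.erase i₀) ∈ Finset.univ.powersetCard k := by
        rw [Finset.mem_powersetCard]
        refine ⟨Finset.subset_univ _, ?_⟩
        rw [Finset.card_insert_of_notMem (fun hc => hj (Finset.mem_of_mem_erase hc)),
          Finset.card_erase_of_mem hi₀t, ht'card]
        omega
      have hsum : ∑ i ∈ insert j (t'.erase i₀), y i
          = y j + (∑ i ∈ t', y i - τ) := by
        rw [Finset.sum_insert (fun hc => hj (Finset.mem_of_mem_erase hc))]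
        rw [Finset.sum_erase_eq_sub hi₀t]
      have := ht'max _ hmem
      rw [hsum] at this
      linarith
    have key : ∑ j, c j * (y j - τ) ≤ ∑ j ∈ t', (y j - τ) := by
      have hsplit : ∑ j, c j * (y j - τ)
          = ∑ j ∈ t', c j * (y j - τ) + ∑ j ∈ t'ᶜ, c j * (y j - τ) :=
        (Finset.sum_add_sum_compl t' _).symm
      have hA : ∑ j ∈ t', c j * (y j - τ) ≤ ∑ j ∈ t', (y j - τ) := by
        apply Finset.sum_le_sum
        intro j hj
        have hy : 0 ≤ y j - τ := by have := hi₀min j hj; linarith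
        nlinarith [h0 j, h1 j]
      have hB : ∑ j ∈ t'ᶜ, c j * (y j - τ) ≤ 0 := by
        apply Finset.sum_nonpos
        intro j hj
        have hy : y j - τ ≤ 0 := by
          have := hout j (by simpa using hj)
          linarith
        nlinarith [h0 j, h1 j]
      linarith
    refine ⟨t', ht'card, ?_⟩
    have e1 : ∑ j, c j * y j = ∑ j, c j * (y j - τ) + (∑ j, c j) * τ := by
      rw [Finset.sum_mul]
      rw [← Finset.sum_add_distrib]
      congr 1; funext j; ring
    have e2 : ∑ j ∈ t', (y j - τ) = ∑ j ∈ t', y j - k * τ := by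
      rw [Finset.sum_sub_distrib]
      simp [ht'card]
    rw [e1, hk]
    linarith [key, e2]

lemma ds_maj {X : Matrix (Fin m) (Fin m) ℝ} (hX : IsDoublyStochastic X) {x y : Fin m → ℝ}
    (hxy : X *ᵥ y = x) : MajOn Finset.univ x y := by
  obtain ⟨hpos, hrow, hcol⟩ := hX
  have hx : ∀ i, x i = ∑ j, X i j * y j := by
    intro i
    rw [← hxy]
    simp [Matrix.mulVec, dotProduct]
  constructor
  · simp_rw [hx]
    rw [Finset.sum_comm]
    exact Finset.sum_congr rfl (fun j _ => by rw [← Finset.sum_mul, hcol j, one_mul])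
  · intro t _
    have hsum : ∑ i ∈ t, x i = ∑ j, (∑ i ∈ t, X i j) * y j := by
      simp_rw [hx]
      rw [Finset.sum_comm]
      congr 1; funext j
      rw [Finset.sum_mul]
    obtain ⟨t', ht'card, ht'⟩ := combo y (fun j => ∑ i ∈ t, X i j)
      (fun j => Finset.sum_nonneg (fun i _ => hpos i j))
      (fun j => by
        have : ∑ i ∈ t, X i j ≤ ∑ i, X i j :=
          Finset.sum_le_sum_of_subset_of_nonneg (Finset.subset_univ t)
            (fun i _ _ => hpos i j)
        rw [hcol j] at this; exact this)
      t.card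
      (by rw [Finset.sum_comm]
          rw [Finset.sum_congr rfl (fun i (_ : i ∈ t) => hrow i)]
          simp)
    exact ⟨t', Finset.subset_univ t', ht'card, by rw [hsum]; exact ht'⟩


lemma step {s : Finset (Fin m)} (hs2 : 2 ≤ s.card) {x y : Fin m → ℝ} (hmaj : MajOn s x y) :
    ∃ (i₀ p q : Fin m) (lam : ℝ) (y' : Fin m → ℝ),
      i₀ ∈ s ∧ p ∈ s ∧ q ∈ s ∧ p ≠ q ∧ 0 ≤ lam ∧ lam ≤ 1 ∧
      y' p = (1 - lam) * y p + lam * y q ∧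
      y' q = lam * y p + (1 - lam) * y q ∧
      (∀ i, i ≠ p → i ≠ q → y' i = y i) ∧
      x i₀ = y' q ∧
      MajOn (s.erase i₀) x (fun i => y' (Equiv.swap i₀ q i)) := by
  have hsne : s.Nonempty := Finset.card_pos.mp (by omega)
  obtain ⟨i₀, hi₀s, hmax⟩ := Finset.exists_max_image s x hsne
  set c := x i₀ with hc
  have hBne : (s.filter (fun j => c ≤ y j)).Nonempty := by
    obtain ⟨t', ht's, ht'card, ht'sum⟩ := hmaj.2 {i₀} (Finset.singleton_subset_iff.mpr hi₀s)
    rw [Finset.card_singleton] at ht'card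
    obtain ⟨j, rfl⟩ := Finset.card_eq_one.mp ht'card
    refine ⟨j, Finset.mem_filter.mpr ⟨ht's (Finset.mem_singleton_self j), ?_⟩⟩
    simpa using ht'sum
  obtain ⟨q, hqB, hqmin⟩ := Finset.exists_min_image _ y hBne
  obtain ⟨hqs, hcb⟩ := Finset.mem_filter.mp hqB
  set b := y q with hb
  have hBpne : ((s.erase q).filter (fun j => y j ≤ c)).Nonempty := by
    by_contra hemp
    rw [Finset.not_nonempty_iff_eq_empty, Finset.filter_eq_empty_iff] at hemp
    have hne' : (s.erase q).Nonempty := by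
      rw [← Finset.card_pos, Finset.card_erase_of_mem hqs]; omega
    have h1 : ((s.erase q).card : ℝ) * c < ∑ i ∈ s.erase q, y i := by
      have := Finset.sum_lt_sum_of_nonempty hne' (f := fun _ => c) (g := y)
        (fun i hi => lt_of_not_ge (hemp hi))
      simpa [Finset.sum_const, nsmul_eq_mul] using this
    have h2 : b + ∑ i ∈ s.erase q, y i = ∑ i ∈ s, y i := Finset.add_sum_erase _ y hqs
    have h3 : ∑ i ∈ s, x i ≤ (s.card : ℝ) * c := by
      have := Finset.sum_le_card_nsmul s x c (fun i hi => hmax i hi)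
      simpa [nsmul_eq_mul] using this
    have h4 : (s.card : ℝ) = ((s.erase q).card : ℝ) + 1 := by
      rw [Finset.card_erase_of_mem hqs]
      push_cast [Nat.cast_sub (by omega : 1 ≤ s.card)]
      ring
    have h5 := hmaj.1
    rw [h4] at h3
    have h3' : ∑ i ∈ s, x i ≤ ((s.erase q).card : ℝ) * c + c := by linarith [h3]; 
    linarith
  obtain ⟨p, hpBp, hpmax⟩ := Finset.exists_max_image _ y hBpne
  obtain ⟨hpe, hac⟩ := Finset.mem_filter.mp hpBp
  have hpq : p ≠ q := Finset.ne_of_mem_erase hpe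
  have hps : p ∈ s := Finset.mem_of_mem_erase hpe
  set a := y p with ha
  have hab : a ≤ b := le_trans hac hcb
  set lam : ℝ := if a = b then 1/2 else (b - c)/(b - a) with hlam
  have hlam0 : 0 ≤ lam := by
    rw [hlam]; split_ifs with h
    · norm_num
    · have : a < b := lt_of_le_of_ne hab h
      apply div_nonneg <;> linarith
  have hlam1 : lam ≤ 1 := by
    rw [hlam]; split_ifs with h
    · norm_num
    · have : a < b := lt_of_le_of_ne hab h
      rw [div_le_one (by linarith)]
      linarith
  have hlc : lam * a + (1 - lam) * b = c := by
    rw [hlam]; split_ifs with h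
    · rw [← h]; have : a = c := le_antisymm hac (h ▸ hcb); linarith
    · have hba : a < b := lt_of_le_of_ne hab h
      have hne0 : b - a ≠ 0 := sub_ne_zero.mpr (ne_of_gt hba)
      field_simp
      ring
  set d := (1 - lam) * a + lam * b with hd
  have hcd : c + d = a + b := by rw [← hlc, hd]; ring
  have had : a ≤ d := by nlinarith [hlam0, hab]
  set y' : Fin m → ℝ := fun i => if i = p then d else if i = q then c else y i with hy'
  have hy'p : y' p = d := by simp [hy']
  have hy'q : y' q = c := by simp [hy', Ne.symm hpq]
  have hy'o : ∀ i, i ≠ p → i ≠ q → y' i = y i := by intro i h1 h2; simp [hy', h1, h2]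
  set σ := Equiv.swap i₀ q with hσ
  have hσinv : ∀ i, σ (σ i) = i := fun i => Equiv.swap_apply_self i₀ q i
  have himgsub : ∀ u : Finset (Fin m), u ⊆ s.erase q → Finset.image σ u ⊆ s.erase i₀ := by
    intro u hu j hj
    obtain ⟨i, hiu, rfl⟩ := Finset.mem_image.mp hj
    have hie := hu hiu
    have hiq : i ≠ q := Finset.ne_of_mem_erase hie
    have his : i ∈ s := Finset.mem_of_mem_erase hie
    by_cases hii : i = i₀
    · subst hii
      rw [hσ, Equiv.swap_apply_left]
      exact Finset.mem_erase.mpr ⟨fun h => hiq h.symm, hqs⟩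
    · rw [hσ, Equiv.swap_apply_of_ne_of_ne hii hiq]
      exact Finset.mem_erase.mpr ⟨hii, his⟩
  have himgsum : ∀ u : Finset (Fin m), ∑ j ∈ u.image σ, y' (σ j) = ∑ i ∈ u, y' i := by
    intro u
    rw [Finset.sum_image (fun i _ j _ h => σ.injective h)]
    exact Finset.sum_congr rfl (fun i _ => by rw [hσinv])
  set Kf := s.filter (fun i => c ≤ y i) with hKf
  set K := Kf.card with hK
  have hqK : q ∈ Kf := hqB
  have hS1 : Kf.erase q ⊆ (s.erase q).filter (fun i => c ≤ y' i) := by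
    intro i hi
    have hiq : i ≠ q := Finset.ne_of_mem_erase hi
    have hiK : i ∈ Kf := Finset.mem_of_mem_erase hi
    obtain ⟨his, hci⟩ := Finset.mem_filter.mp hiK
    refine Finset.mem_filter.mpr ⟨Finset.mem_erase.mpr ⟨hiq, his⟩, ?_⟩
    by_cases hip : i = p
    · subst hip
      have hca : a = c := le_antisymm hac hci
      have : d = b := by linarith
      rw [hy'p, this]; exact hcb
    · rw [hy'o i hip hiq]; exact hci
  have hsum_y' : ∑ i ∈ s, y' i = ∑ i ∈ s, y i := by
    have hqp : q ∈ s.erase p := Finset.mem_erase.mpr ⟨Ne.symm hpq, hqs⟩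
    rw [← Finset.add_sum_erase _ y' hps, ← Finset.add_sum_erase _ y' hqp,
      ← Finset.add_sum_erase _ y hps, ← Finset.add_sum_erase _ y hqp]
    rw [hy'p, hy'q]
    have : ∑ i ∈ (s.erase p).erase q, y' i = ∑ i ∈ (s.erase p).erase q, y i := by
      apply Finset.sum_congr rfl
      intro i hi
      exact hy'o i (Finset.ne_of_mem_erase (Finset.mem_of_mem_erase hi))
        (Finset.ne_of_mem_erase hi)
    rw [this, ← ha, ← hb]
    linarith
  refine ⟨i₀, p, q, lam, y', hi₀s, hps, hqs, hpq, hlam0, hlam1, ?_, ?_, hy'o, ?_, ?_, ?_⟩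
  · rw [hy'p, hd, ← ha, ← hb]
  · rw [hy'q, ← hlc, ← ha, ← hb]
  · rw [hy'q]
  · -- sums equal
    rw [Finset.sum_erase_eq_sub hi₀s]
    have himg_eq : (s.erase q).image σ = s.erase i₀ := by
      apply Finset.eq_of_subset_of_card_le (himgsub _ (le_refl _))
      rw [Finset.card_image_of_injective _ σ.injective,
        Finset.card_erase_of_mem hqs, Finset.card_erase_of_mem hi₀s]
    rw [← himg_eq, himgsum, Finset.sum_erase_eq_sub hqs, hy'q, hsum_y', hmaj.1, ← hc]
  · -- subsets
    intro t hts
    by_cases hcase : t.card + 1 ≤ K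
    · have hcard1 : t.card ≤ ((s.erase q).filter (fun i => c ≤ y' i)).card := by
        have := Finset.card_le_card hS1
        rw [Finset.card_erase_of_mem hqK] at this
        omega
      obtain ⟨u, husub, hucard⟩ := Finset.exists_subset_card_eq hcard1
      refine ⟨u.image σ, himgsub u (husub.trans (Finset.filter_subset _ _)), ?_, ?_⟩
      · rw [Finset.card_image_of_injective _ σ.injective, hucard]
      · have h1 : ∑ i ∈ t, x i ≤ ∑ _i ∈ t, c := by
          apply Finset.sum_le_sum
          intro i hi
          exact hmax i (Finset.mem_of_mem_erase (hts hi))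
        have h2 : ∑ _i ∈ u, (c : ℝ) ≤ ∑ i ∈ u, y' i := by
          apply Finset.sum_le_sum
          intro i hi
          exact (Finset.mem_filter.mp (husub hi)).2
        have h3 : ∑ j ∈ u.image σ, y' (σ j) = ∑ i ∈ u, y' i := himgsum u
        simp only [Finset.sum_const, smul_eq_mul] at h1 h2
        calc ∑ i ∈ t, x i ≤ t.card * c := by simpa using h1
          _ = u.card * c := by rw [hucard]
          _ ≤ ∑ i ∈ u, y' i := by simpa using h2
          _ = ∑ j ∈ u.image σ, y' (σ j) := h3.symm
    · push_neg at hcase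
      have hi₀t : i₀ ∉ t := fun h => (Finset.mem_erase.mp (hts h)).1 rfl
      obtain ⟨u, hus, hucard, husum⟩ := hmaj.2 (insert i₀ t)
        (Finset.insert_subset hi₀s (hts.trans (Finset.erase_subset _ _)))
      rw [Finset.card_insert_of_notMem hi₀t] at hucard
      rw [Finset.sum_insert hi₀t, ← hc] at husum
      have hufilter : ∀ (hq : q ∉ u ∨ p ∉ u), ∃ r ∈ u, y r < c ∧ r ≠ q ∧ y r ≤ a := by
        intro hq
        have hcount : (u.filter (fun i => c ≤ y i)).card < u.card := by
          have hsubK : u.filter (fun i => c ≤ y i) ⊆ Kf := by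
            intro i hi
            obtain ⟨hiu, hci⟩ := Finset.mem_filter.mp hi
            exact Finset.mem_filter.mpr ⟨hus hiu, hci⟩
          rcases hq with hq | hp
          · have hsubK' : u.filter (fun i => c ≤ y i) ⊆ Kf.erase q := by
              intro i hi
              exact Finset.mem_erase.mpr ⟨fun h => hq (h ▸ (Finset.mem_filter.mp hi).1),
                hsubK hi⟩
            have := Finset.card_le_card hsubK'
            rw [Finset.card_erase_of_mem hqK] at this
            omega
          · have := Finset.card_le_card hsubK
            omega
        obtain ⟨r, hru, hrc⟩ : ∃ r ∈ u, ¬ c ≤ y r := by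
          by_contra hall
          push_neg at hall
          rw [Finset.filter_true_of_mem hall] at hcount
          omega
        push_neg at hrc
        have hrq : r ≠ q := fun h => by rw [h] at hrc; exact absurd hrc (not_lt.mpr hcb)
        refine ⟨r, hru, hrc, hrq, ?_⟩
        exact hpmax r (Finset.mem_filter.mpr ⟨Finset.mem_erase.mpr ⟨hrq, hus hru⟩,
          le_of_lt hrc⟩)
      have key : ∃ u' ⊆ s.erase q, u'.card = t.card ∧ ∑ i ∈ u, y i ≤ ∑ i ∈ u', y' i + c := by
        by_cases hqu : q ∈ u
        · by_cases hpu : p ∈ u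
          · refine ⟨u.erase q, ?_, ?_, ?_⟩
            · exact fun i hi => Finset.mem_erase.mpr ⟨Finset.ne_of_mem_erase hi,
                hus (Finset.mem_of_mem_erase hi)⟩
            · rw [Finset.card_erase_of_mem hqu]; omega
            · have hpu' : p ∈ u.erase q := Finset.mem_erase.mpr ⟨hpq, hpu⟩
              rw [← Finset.add_sum_erase _ y' hpu', hy'p]
              have heq : ∑ i ∈ (u.erase q).erase p, y' i = ∑ i ∈ (u.erase q).erase p, y i := by
                apply Finset.sum_congr rfl
                intro i hi
                exact hy'o i (Finset.ne_of_mem_erase hi)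
                  (Finset.ne_of_mem_erase (Finset.mem_of_mem_erase hi))
              rw [heq]
              have e1 : a + ∑ i ∈ (u.erase q).erase p, y i = ∑ i ∈ u.erase q, y i :=
                Finset.add_sum_erase _ y hpu'
              have e2 : b + ∑ i ∈ u.erase q, y i = ∑ i ∈ u, y i :=
                Finset.add_sum_erase _ y hqu
              linarith
          · obtain ⟨r, hru, hrc, hrq, hra⟩ := hufilter (Or.inr hpu)
            have hrp : r ≠ p := fun h => hpu (h ▸ hru)
            have hru' : r ∈ u.erase q := Finset.mem_erase.mpr ⟨hrq, hru⟩
            have hpnot : p ∉ (u.erase q).erase r :=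
              fun h => hpu (Finset.mem_of_mem_erase (Finset.mem_of_mem_erase h))
            refine ⟨insert p ((u.erase q).erase r), ?_, ?_, ?_⟩
            · apply Finset.insert_subset hpe
              intro i hi
              exact Finset.mem_erase.mpr
                ⟨Finset.ne_of_mem_erase (Finset.mem_of_mem_erase hi),
                  hus (Finset.mem_of_mem_erase (Finset.mem_of_mem_erase hi))⟩
            · have hK1 : 1 ≤ K := Finset.card_pos.mpr ⟨q, hqK⟩
              have c1 : ((u.erase q).erase r).card = t.card - 1 := by
                rw [Finset.card_erase_of_mem hru', Finset.card_erase_of_mem hqu, hucard]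
                omega
              rw [Finset.card_insert_of_notMem hpnot, c1]
              omega
            · rw [Finset.sum_insert hpnot, hy'p]
              have heq : ∑ i ∈ (u.erase q).erase r, y' i
                  = ∑ i ∈ (u.erase q).erase r, y i := by
                apply Finset.sum_congr rfl
                intro i hi
                refine hy'o i (fun h => hpnot (h ▸ hi)) ?_
                exact Finset.ne_of_mem_erase (Finset.mem_of_mem_erase hi)
              rw [heq]
              have e1 : y r + ∑ i ∈ (u.erase q).erase r, y i = ∑ i ∈ u.erase q, y i :=
                Finset.add_sum_erase _ y hru'
              have e2 : b + ∑ i ∈ u.erase q, y i = ∑ i ∈ u, y i :=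
                Finset.add_sum_erase _ y hqu
              linarith
        · obtain ⟨r, hru, hrc, hrq, hra⟩ := hufilter (Or.inl hqu)
          refine ⟨u.erase r, ?_, ?_, ?_⟩
          · intro i hi
            exact Finset.mem_erase.mpr ⟨fun h => hqu (h ▸ Finset.mem_of_mem_erase hi),
              hus (Finset.mem_of_mem_erase hi)⟩
          · rw [Finset.card_erase_of_mem hru]; omega
          · have hge : ∑ i ∈ u.erase r, y i ≤ ∑ i ∈ u.erase r, y' i := by
              apply Finset.sum_le_sum
              intro i hi
              by_cases hip : i = p
              · subst hip; rw [hy'p, ← ha]; exact had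
              · rw [hy'o i hip (fun h => hqu (h ▸ Finset.mem_of_mem_erase hi))]
            have e1 : y r + ∑ i ∈ u.erase r, y i = ∑ i ∈ u, y i :=
              Finset.add_sum_erase _ y hru
            linarith
      obtain ⟨u', hu's, hu'card, hu'sum⟩ := key
      refine ⟨u'.image σ, himgsub u' hu's, ?_, ?_⟩
      · rw [Finset.card_image_of_injective _ σ.injective, hu'card]
      · rw [himgsum u']
        linarith


lemma unit_mul {A B : Matrix (Fin m) (Fin m) ℂ} (hA : Aᴴ * A = 1) (hB : Bᴴ * B = 1) :
    (A * B)ᴴ * (A * B) = 1 := by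
  rw [conjTranspose_mul, Matrix.mul_assoc, ← Matrix.mul_assoc Aᴴ A B, hA, Matrix.one_mul, hB]

lemma conj_mul3 (A B C D : Matrix (Fin m) (Fin m) ℂ) :
    (A * B * C)ᴴ * D * (A * B * C) = Cᴴ * (Bᴴ * (Aᴴ * D * A) * B) * C := by
  rw [conjTranspose_mul, conjTranspose_mul]
  simp only [Matrix.mul_assoc]

lemma main (s : Finset (Fin m)) : ∀ (x y : Fin m → ℝ), (∀ i ∉ s, x i = y i) → MajOn s x y →
    ∃ (k : ℕ) (U : Fin (2^k) → Matrix (Fin m) (Fin m) ℂ),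
      k + 1 ≤ max s.card 1 ∧ (∀ i, (U i)ᴴ * U i = 1) ∧
      diagonal (fun i => (x i : ℂ))
        = ((2 : ℂ)^k)⁻¹ • ∑ i, (U i)ᴴ * diagonal (fun i => (y i : ℂ)) * U i := by
  induction s using Finset.strongInduction with
  | _ s ih =>
    intro x y hoff hmaj
    by_cases hs : s.card ≤ 1
    · have hxy : ∀ i, x i = y i := by
        intro i
        by_cases hi : i ∈ s
        · have hone : ∀ b ∈ s, b = i := fun b hb => Finset.card_le_one.mp hs b hb i hi
          have hx : ∑ j ∈ s, x j = x i :=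
            Finset.sum_eq_single_of_mem i hi (fun b hb hbi => absurd (hone b hb) hbi)
          have hy : ∑ j ∈ s, y j = y i :=
            Finset.sum_eq_single_of_mem i hi (fun b hb hbi => absurd (hone b hb) hbi)
          rw [← hx, ← hy]; exact hmaj.1
        · exact hoff i hi
      refine ⟨0, fun _ => 1, by simp, fun i => by simp, ?_⟩
      have : (fun i => ((x i : ℂ))) = (fun i => ((y i : ℂ))) := by
        funext i; exact_mod_cast congrArg Complex.ofReal (hxy i)
      rw [this]
      simp
    · push_neg at hs
      have hs2 : 2 ≤ s.card := hs
      obtain ⟨i₀, p, q, lam, y', hi₀s, hps, hqs, hpq, hlam0, hlam1, hy'p, hy'q, hy'o, hxi₀,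
        hmaj'⟩ := step hs2 hmaj
      set σ := Equiv.swap i₀ q with hσ
      set y'' : Fin m → ℝ := fun i => y' (σ i) with hy''
      have hoff' : ∀ i ∉ s.erase i₀, x i = y'' i := by
        intro i hi
        by_cases hii : i = i₀
        · rw [hii, hy'']
          simp only [hσ, Equiv.swap_apply_left]
          exact hxi₀
        · have his : i ∉ s := fun h => hi (Finset.mem_erase.mpr ⟨hii, h⟩)
          have hiq : i ≠ q := fun h => his (h ▸ hqs)
          have hip : i ≠ p := fun h => his (h ▸ hps)
          rw [hy'']
          simp only [hσ, Equiv.swap_apply_of_ne_of_ne hii hiq]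
          rw [hy'o i hip hiq]
          exact hoff i his
      obtain ⟨k', U', hk', hU'unit, hU'eq⟩ :=
        ih (s.erase i₀) (Finset.erase_ssubset hi₀s) x y'' hoff' hmaj'
      set si := Real.sqrt (1 - lam) with hsi
      set co := Real.sqrt lam with hco
      have hsi2 : si^2 = 1 - lam := Real.sq_sqrt (by linarith)
      have hco2 : co^2 = lam := Real.sq_sqrt hlam0
      have hsc : si^2 + co^2 = 1 := by rw [hsi2, hco2]; ring
      have hsiC : (si : ℂ)^2 = 1 - (lam : ℂ) := by exact_mod_cast congrArg Complex.ofReal hsi2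
      have hcoC : (co : ℂ)^2 = (lam : ℂ) := by exact_mod_cast congrArg Complex.ofReal hco2
      have havg : (2 : ℂ)⁻¹ • ((rot p q si co 1)ᴴ * diagonal (fun i => (y i : ℂ)) * rot p q si co 1
          + (rot p q si co (-1))ᴴ * diagonal (fun i => (y i : ℂ)) * rot p q si co (-1))
          = diagonal (fun i => (y' i : ℂ)) := by
        rw [rot_avg hpq]
        refine congrArg diagonal (funext fun i => ?_)
        by_cases hipp : i = p
        · rw [if_pos hipp, hipp, hy'p, hsiC, hcoC]
          push_cast
          ring
        · by_cases hiq : i = q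
          · rw [if_neg hipp, if_pos hiq, hiq, hy'q, hsiC, hcoC]
            push_cast
            ring
          · rw [if_neg hipp, if_neg hiq, hy'o i hipp hiq]
      have hperm : (permM σ)ᴴ * diagonal (fun i => (y' i : ℂ)) * permM σ
          = diagonal (fun i => (y'' i : ℂ)) := by
        rw [permM_conj]
        refine congrArg diagonal (funext fun i => ?_)
        simp [hy'', hσ, Equiv.symm_swap]
      set sgn : Fin 2 → ℝ := fun j => if j = 0 then 1 else -1 with hsgn
      have hsgn2 : ∀ j, (sgn j)^2 = 1 := by
        intro j
        rw [hsgn]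
        by_cases h : j = 0 <;> simp [h] <;> norm_num
      set e : Fin (2^(k'+1)) ≃ Fin (2^k') × Fin 2 :=
        (finCongr (pow_succ 2 k')).trans finProdFinEquiv.symm with he
      set W : Fin (2^k') × Fin 2 → Matrix (Fin m) (Fin m) ℂ :=
        fun vε => rot p q si co (sgn vε.2) * permM σ * U' vε.1 with hW
      have hWunit : ∀ vε, (W vε)ᴴ * W vε = 1 := by
        intro vε
        rw [hW]
        exact unit_mul (unit_mul (rot_unitary hpq si co hsc _ (hsgn2 _)) (permM_unitary σ))
          (hU'unit _)
      have hS2 : (rot p q si co 1)ᴴ * diagonal (fun i => (y i : ℂ)) * rot p q si co 1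
          + (rot p q si co (-1))ᴴ * diagonal (fun i => (y i : ℂ)) * rot p q si co (-1)
          = (2 : ℂ) • diagonal (fun i => (y' i : ℂ)) := by
        rw [← havg, smul_smul]
        norm_num
      have key1 : ∀ v : Fin (2^k'),
          ∑ ε : Fin 2, (W (v, ε))ᴴ * diagonal (fun i => (y i : ℂ)) * W (v, ε)
          = (2 : ℂ) • ((U' v)ᴴ * diagonal (fun i => (y'' i : ℂ)) * U' v) := by
        intro v
        rw [Fin.sum_univ_two]
        have hsgn0 : sgn 0 = 1 := by simp [hsgn]
        have hsgn1 : sgn 1 = -1 := by simp [hsgn]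
        simp only [hW, hsgn0, hsgn1]
        rw [conj_mul3, conj_mul3]
        rw [← Matrix.add_mul, ← Matrix.mul_add, ← Matrix.add_mul, ← Matrix.mul_add]
        rw [hS2]
        rw [Matrix.mul_smul, Matrix.smul_mul, Matrix.mul_smul, Matrix.smul_mul]
        rw [hperm]
      refine ⟨k' + 1, fun i => W (e i), ?_, fun i => hWunit (e i), ?_⟩
      · have hcard : (s.erase i₀).card = s.card - 1 := Finset.card_erase_of_mem hi₀s
        rw [hcard] at hk'
        rcases max_cases (s.card - 1) 1 with ⟨h1, h2⟩ | ⟨h1, h2⟩ <;>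
          rcases max_cases s.card 1 with ⟨h3, h4⟩ | ⟨h3, h4⟩ <;> omega
      · rw [Equiv.sum_comp e (fun j => (W j)ᴴ * diagonal (fun i => (y i : ℂ)) * W j)]
        rw [Fintype.sum_prod_type]
        simp_rw [key1]
        rw [← Finset.smul_sum, smul_smul]
        have h2c : ((2 : ℂ)^(k'+1))⁻¹ * 2 = ((2 : ℂ)^k')⁻¹ := by
          rw [pow_succ, mul_inv, mul_assoc, inv_mul_cancel₀ (two_ne_zero), mul_one]
        rw [h2c]
        exact hU'eq

end Stmt12

theorem stmt_12 (n : ℕ) (A B : ℕ → Matrix (Fin n) (Fin n) ℂ)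
    (hAbdd : ∃ C : ℝ, ∀ k i j, ‖A k i j‖ ≤ C)
    (hBbdd : ∃ C : ℝ, ∀ k i j, ‖B k i j‖ ≤ C)
    (hA : ∀ k, (A k)ᴴ = A k) (hB : ∀ k, (B k)ᴴ = B k)
    (hmaj : ∀ k, ∃ (lA lB : Fin n → ℝ) (UA UB : Matrix (Fin n) (Fin n) ℂ)
        (X : Matrix (Fin n) (Fin n) ℝ),
      UAᴴ * UA = 1 ∧ UA * UAᴴ = 1 ∧ UBᴴ * UB = 1 ∧ UB * UBᴴ = 1 ∧
      A k = UAᴴ * Matrix.diagonal (fun i => (lA i : ℂ)) * UA ∧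
      B k = UBᴴ * Matrix.diagonal (fun i => (lB i : ℂ)) * UB ∧
      IsDoublyStochastic X ∧ X *ᵥ lB = lA) :
    ∃ U : Fin (2 ^ (n - 1)) → ℕ → Matrix (Fin n) (Fin n) ℂ,
      (∀ i k, (U i k)ᴴ * U i k = 1 ∧ U i k * (U i k)ᴴ = 1) ∧
      ∀ k, A k = ∑ i, ((1 : ℂ) / 2 ^ (n - 1)) • ((U i k)ᴴ * B k * U i k) := by
  classical
  have hkey : ∀ k : ℕ, ∃ V : Fin (2 ^ (n - 1)) → Matrix (Fin n) (Fin n) ℂ,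
      (∀ i, (V i)ᴴ * V i = 1 ∧ V i * (V i)ᴴ = 1) ∧
      A k = ∑ i, ((1 : ℂ) / 2 ^ (n - 1)) • ((V i)ᴴ * B k * V i) := by
    intro k
    obtain ⟨lA, lB, UA, UB, X, hUA1, hUA2, hUB1, hUB2, hAeq, hBeq, hXds, hXv⟩ := hmaj k
    have hmj : Stmt12.MajOn Finset.univ lA lB := Stmt12.ds_maj hXds hXv
    obtain ⟨k₀, W, hk₀, hWunit, hWeq⟩ :=
      Stmt12.main Finset.univ lA lB (fun i hi => absurd (Finset.mem_univ i) hi) hmj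
    have hk₀n : k₀ ≤ n - 1 := by
      rw [Finset.card_univ, Fintype.card_fin] at hk₀
      rcases max_cases n 1 with ⟨h1, h2⟩ | ⟨h1, h2⟩ <;> omega
    have hsplit : 2 ^ (n - 1) = 2 ^ (n - 1 - k₀) * 2 ^ k₀ := by
      rw [← pow_add]
      congr 1
      omega
    set e : Fin (2 ^ (n - 1)) ≃ Fin (2 ^ (n - 1 - k₀)) × Fin (2 ^ k₀) :=
      (finCongr hsplit).trans finProdFinEquiv.symm with he
    set V : Fin (2 ^ (n - 1)) → Matrix (Fin n) (Fin n) ℂ :=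
      fun i => UBᴴ * W (e i).2 * UA with hV
    have hVunit : ∀ i, (V i)ᴴ * V i = 1 := by
      intro i
      rw [hV]
      refine Stmt12.unit_mul (Stmt12.unit_mul ?_ ?_) ?_
      · rw [conjTranspose_conjTranspose]; exact hUB2
      · exact hWunit _
      · exact hUA1
    have hDB : UB * B k * UBᴴ = Matrix.diagonal (fun i => (lB i : ℂ)) := by
      rw [hBeq]
      calc UB * (UBᴴ * Matrix.diagonal (fun i => (lB i : ℂ)) * UB) * UBᴴ
          = (UB * UBᴴ) * Matrix.diagonal (fun i => (lB i : ℂ)) * (UB * UBᴴ) := by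
            simp only [Matrix.mul_assoc]
        _ = Matrix.diagonal (fun i => (lB i : ℂ)) := by rw [hUB2]; simp
    have hconj : ∀ i, (V i)ᴴ * B k * V i
        = UAᴴ * ((W (e i).2)ᴴ * Matrix.diagonal (fun i => (lB i : ℂ)) * W (e i).2) * UA := by
      intro i
      rw [hV, Stmt12.conj_mul3, conjTranspose_conjTranspose, hDB]
    refine ⟨V, fun i => ⟨hVunit i, mul_eq_one_comm.mp (hVunit i)⟩, ?_⟩
    simp_rw [hconj]
    rw [← Finset.smul_sum]
    have hsum : ∑ i : Fin (2 ^ (n - 1)),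
        UAᴴ * ((W (e i).2)ᴴ * Matrix.diagonal (fun i => (lB i : ℂ)) * W (e i).2) * UA
        = (2 ^ (n - 1 - k₀) : ℕ) • ∑ j : Fin (2 ^ k₀),
            UAᴴ * ((W j)ᴴ * Matrix.diagonal (fun i => (lB i : ℂ)) * W j) * UA := by
      rw [← Equiv.sum_comp e.symm
        (fun i => UAᴴ * ((W (e i).2)ᴴ * Matrix.diagonal (fun i => (lB i : ℂ)) * W (e i).2) * UA)]
      simp only [Equiv.apply_symm_apply]
      rw [Fintype.sum_prod_type]
      have hinner : ∀ a : Fin (2 ^ (n - 1 - k₀)), (∑ b : Fin (2 ^ k₀),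
          UAᴴ * ((W (a, b).2)ᴴ * Matrix.diagonal (fun i => (lB i : ℂ)) * W (a, b).2) * UA)
          = ∑ j : Fin (2 ^ k₀),
            UAᴴ * ((W j)ᴴ * Matrix.diagonal (fun i => (lB i : ℂ)) * W j) * UA :=
        fun a => rfl
      rw [Finset.sum_congr rfl (fun a _ => hinner a), Finset.sum_const, Finset.card_univ,
        Fintype.card_fin]
    rw [hsum]
    have hA2 : A k = ((2 : ℂ) ^ k₀)⁻¹ • ∑ j : Fin (2 ^ k₀),
        UAᴴ * ((W j)ᴴ * Matrix.diagonal (fun i => (lB i : ℂ)) * W j) * UA := by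
      rw [hAeq, hWeq]
      rw [Matrix.mul_smul, Matrix.smul_mul]
      congr 1
      rw [Finset.mul_sum, Finset.sum_mul]
    rw [hA2]
    rw [smul_comm, ← Nat.cast_smul_eq_nsmul ℂ, smul_smul]
    congr 1
    have hcast : (2 : ℂ) ^ (n - 1) = 2 ^ (n - 1 - k₀) * 2 ^ k₀ := by
      rw [← pow_add]
      congr 1
      omega
    push_cast
    rw [hcast]
    have h1 : (2 : ℂ) ^ (n - 1 - k₀) ≠ 0 := pow_ne_zero _ two_ne_zero
    have h2 : (2 : ℂ) ^ k₀ ≠ 0 := pow_ne_zero _ two_ne_zero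
    field_simp
  choose V hV using hkey
  exact ⟨fun i k => V k i, fun i k => (hV k).1 i, fun k => (hV k).2⟩
end

section
/- Let A, B be self-adjoint n×n complex matrices, and suppose A lies in the norm closure of the convex hull of the unitary orbit {U*BU : U unitary}. Then there exists a doubly stochastic matrix X with X·λ(B) = λ(A), where λ(A), λ(B) are eigenvalue vectors of A and B. -/
open Matrix

lemma unit_mul_aux {n : ℕ} {X Y : Matrix (Fin n) (Fin n) ℂ}
    (hX1 : Xᴴ * X = 1) (hX2 : X * Xᴴ = 1) (hY1 : Yᴴ * Y = 1) (hY2 : Y * Yᴴ = 1) :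
    (X * Y)ᴴ * (X * Y) = 1 ∧ (X * Y) * (X * Y)ᴴ = 1 := by
  constructor
  · rw [conjTranspose_mul, mul_assoc, ← mul_assoc Xᴴ, hX1, one_mul, hY1]
  · rw [conjTranspose_mul, mul_assoc, ← mul_assoc Y, hY2, one_mul, hX2]

lemma unit_ct {n : ℕ} {X : Matrix (Fin n) (Fin n) ℂ}
    (h1 : Xᴴ * X = 1) (h2 : X * Xᴴ = 1) : (Xᴴ)ᴴ * Xᴴ = 1 ∧ Xᴴ * (Xᴴ)ᴴ = 1 := by
  rw [conjTranspose_conjTranspose]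
  exact ⟨h2, h1⟩

lemma diag_entry_re {n : ℕ} (W : Matrix (Fin n) (Fin n) ℂ) (v : Fin n → ℝ) (p : Fin n) :
    ((Wᴴ * Matrix.diagonal (fun q => (v q : ℂ)) * W) p p).re
      = ∑ q, Complex.normSq (W q p) * v q := by
  have h : (Wᴴ * Matrix.diagonal (fun q => (v q : ℂ)) * W) p p
      = ∑ q, ((Complex.normSq (W q p) * v q : ℝ) : ℂ) := by
    rw [Matrix.mul_assoc]
    simp only [Matrix.mul_apply, Matrix.conjTranspose_apply, Complex.star_def]
    refine Finset.sum_congr rfl fun q _ => ?_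
    rw [show (∑ j, Matrix.diagonal (fun q => ((v q : ℝ) : ℂ)) q j * W j p)
        = (v q : ℂ) * W q p from by simp [Matrix.diagonal_apply, ite_mul]]
    rw [show (starRingEnd ℂ) (W q p) * ((v q : ℂ) * W q p)
        = (v q : ℂ) * ((starRingEnd ℂ) (W q p) * W q p) from by ring,
      ← Complex.normSq_eq_conj_mul_self]
    push_cast
    ring
  rw [h, Complex.re_sum]
  simp

lemma col_normSq_sum {n : ℕ} {W : Matrix (Fin n) (Fin n) ℂ}
    (h : Wᴴ * W = 1) (p : Fin n) : ∑ q, Complex.normSq (W q p) = 1 := by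
  have h2 := congrArg (fun M => (M p p).re) h
  simp only [Matrix.mul_apply, Matrix.conjTranspose_apply, Matrix.one_apply_eq,
    Complex.one_re, Complex.re_sum] at h2
  rw [← h2]
  refine Finset.sum_congr rfl fun q _ => ?_
  rw [Complex.star_def, ← Complex.normSq_eq_conj_mul_self]
  simp

lemma row_normSq_sum {n : ℕ} {W : Matrix (Fin n) (Fin n) ℂ}
    (h : W * Wᴴ = 1) (q : Fin n) : ∑ p, Complex.normSq (W q p) = 1 := by
  have h2 := congrArg (fun M => (M q q).re) h
  simp only [Matrix.mul_apply, Matrix.conjTranspose_apply, Matrix.one_apply_eq,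
    Complex.one_re, Complex.re_sum] at h2
  rw [← h2]
  refine Finset.sum_congr rfl fun p _ => ?_
  rw [Complex.star_def, Complex.mul_conj]
  simp


lemma isCompact_DS (n : ℕ) :
    IsCompact {X : Matrix (Fin n) (Fin n) ℝ | IsDoublyStochastic X} := by
  have hCcomp : IsCompact (Set.univ.pi fun _ : Fin n => Set.univ.pi fun _ : Fin n =>
      Set.Icc (0 : ℝ) 1 : Set (Matrix (Fin n) (Fin n) ℝ)) :=
    isCompact_univ_pi fun _ => isCompact_univ_pi fun _ => isCompact_Icc
  refine hCcomp.of_isClosed_subset ?_ ?_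
  · have h : {X : Matrix (Fin n) (Fin n) ℝ | IsDoublyStochastic X}
        = (⋂ i, ⋂ j, {X : Matrix (Fin n) (Fin n) ℝ | 0 ≤ X i j}) ∩
        ((⋂ i, {X : Matrix (Fin n) (Fin n) ℝ | ∑ j, X i j = 1}) ∩
         (⋂ j, {X : Matrix (Fin n) (Fin n) ℝ | ∑ i, X i j = 1})) := by
      ext X
      simp only [IsDoublyStochastic, Set.mem_setOf_eq, Set.mem_inter_iff,
        Set.mem_iInter, Set.mem_setOf_eq]
    rw [h]
    refine IsClosed.inter ?_ (IsClosed.inter ?_ ?_)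
    · exact isClosed_iInter fun i => isClosed_iInter fun j =>
        isClosed_le continuous_const ((continuous_apply j).comp (continuous_apply i))
    · exact isClosed_iInter fun i => isClosed_eq
          (continuous_finset_sum _ fun j _ => (continuous_apply j).comp (continuous_apply i))
          continuous_const
    · exact isClosed_iInter fun j => isClosed_eq
          (continuous_finset_sum _ fun i _ => (continuous_apply j).comp (continuous_apply i))
          continuous_const
  · rintro X ⟨h0, h1, _⟩
    intro i _
    intro j _
    refine ⟨h0 i j, ?_⟩
    rw [← h1 i]
    exact Finset.single_le_sum (fun j' _ => h0 i j') (Finset.mem_univ j)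

lemma isClosed_DSimage {n : ℕ} (lB : Fin n → ℝ) :
    IsClosed ((fun X : Matrix (Fin n) (Fin n) ℝ => X *ᵥ lB) ''
      {X : Matrix (Fin n) (Fin n) ℝ | IsDoublyStochastic X}) := by
  refine IsCompact.isClosed (IsCompact.image (isCompact_DS n) ?_)
  apply continuous_pi
  intro p
  simp only [Matrix.mulVec, dotProduct]
  exact continuous_finset_sum _ fun q _ =>
    (continuous_id.matrix_elem p q).mul continuous_const

lemma cont_d {n : ℕ} (UA : Matrix (Fin n) (Fin n) ℂ) :
    Continuous (fun S : Matrix (Fin n) (Fin n) ℂ => fun p => ((UA * S * UAᴴ) p p).re) := by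
  apply continuous_pi
  intro p
  exact Complex.continuous_re.comp
    (((continuous_const.matrix_mul continuous_id).matrix_mul continuous_const).matrix_elem p p)

set_option maxHeartbeats 1000000 in
theorem stmt_16 (n : ℕ) (A B : Matrix (Fin n) (Fin n) ℂ)
    (hA : Aᴴ = A) (hB : Bᴴ = B)
    (hclos : A ∈ closure {S : Matrix (Fin n) (Fin n) ℂ |
      ∃ (k : ℕ) (t : Fin k → ℝ) (U : Fin k → Matrix (Fin n) (Fin n) ℂ),
        (∀ i, 0 ≤ t i) ∧ (∑ i, t i = 1) ∧
        (∀ i, (U i)ᴴ * U i = 1 ∧ U i * (U i)ᴴ = 1) ∧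
        S = ∑ i, (t i : ℂ) • ((U i)ᴴ * B * U i)}) :
    ∃ (lA lB : Fin n → ℝ) (UA UB : Matrix (Fin n) (Fin n) ℂ)
        (X : Matrix (Fin n) (Fin n) ℝ),
      UAᴴ * UA = 1 ∧ UA * UAᴴ = 1 ∧ UBᴴ * UB = 1 ∧ UB * UBᴴ = 1 ∧
      A = UAᴴ * Matrix.diagonal (fun i => (lA i : ℂ)) * UA ∧
      B = UBᴴ * Matrix.diagonal (fun i => (lB i : ℂ)) * UB ∧
      IsDoublyStochastic X ∧ X *ᵥ lB = lA := by
  have hA' : A.IsHermitian := hA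
  have hB' : B.IsHermitian := hB
  set lA : Fin n → ℝ := hA'.eigenvalues with hlA
  set lB : Fin n → ℝ := hB'.eigenvalues with hlB
  set VA : Matrix (Fin n) (Fin n) ℂ := (hA'.eigenvectorUnitary : Matrix (Fin n) (Fin n) ℂ)
    with hVA
  set VB : Matrix (Fin n) (Fin n) ℂ := (hB'.eigenvectorUnitary : Matrix (Fin n) (Fin n) ℂ)
    with hVB
  set UA : Matrix (Fin n) (Fin n) ℂ := VAᴴ with hUA
  set UB : Matrix (Fin n) (Fin n) ℂ := VBᴴ with hUB
  have hVA1 : VAᴴ * VA = 1 := by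
    simpa [Matrix.star_eq_conjTranspose] using
      (Matrix.mem_unitaryGroup_iff'.mp hA'.eigenvectorUnitary.2)
  have hVA2 : VA * VAᴴ = 1 := by
    simpa [Matrix.star_eq_conjTranspose] using
      (Matrix.mem_unitaryGroup_iff.mp hA'.eigenvectorUnitary.2)
  have hVB1 : VBᴴ * VB = 1 := by
    simpa [Matrix.star_eq_conjTranspose] using
      (Matrix.mem_unitaryGroup_iff'.mp hB'.eigenvectorUnitary.2)
  have hVB2 : VB * VBᴴ = 1 := by
    simpa [Matrix.star_eq_conjTranspose] using
      (Matrix.mem_unitaryGroup_iff.mp hB'.eigenvectorUnitary.2)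
  have hUA1 : UAᴴ * UA = 1 := by rw [hUA, conjTranspose_conjTranspose]; exact hVA2
  have hUA2 : UA * UAᴴ = 1 := by rw [hUA, conjTranspose_conjTranspose]; exact hVA1
  have hUB1 : UBᴴ * UB = 1 := by rw [hUB, conjTranspose_conjTranspose]; exact hVB2
  have hUB2 : UB * UBᴴ = 1 := by rw [hUB, conjTranspose_conjTranspose]; exact hVB1
  have hAdec : A = UAᴴ * Matrix.diagonal (fun i => (lA i : ℂ)) * UA := by
    rw [hUA, conjTranspose_conjTranspose]
    have := hA'.spectral_theorem
    exact this
  have hBdec : B = UBᴴ * Matrix.diagonal (fun i => (lB i : ℂ)) * UB := by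
    rw [hUB, conjTranspose_conjTranspose]
    have := hB'.spectral_theorem
    exact this
  have hDA : UA * A * UAᴴ = Matrix.diagonal (fun i => (lA i : ℂ)) := by
    rw [hAdec, ← mul_assoc, ← mul_assoc, hUA2, one_mul, mul_assoc, hUA2, mul_one]
  -- the set of doubly stochastic matrices
  set K : Set (Matrix (Fin n) (Fin n) ℝ) := {X | IsDoublyStochastic X} with hK
  -- the image map
  set f : Matrix (Fin n) (Fin n) ℝ → (Fin n → ℝ) := fun X => X *ᵥ lB with hf
  set d : Matrix (Fin n) (Fin n) ℂ → (Fin n → ℝ) :=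
    fun S => fun p => ((UA * S * UAᴴ) p p).re with hd
  have hKcomp : IsCompact K := isCompact_DS n
  have hclosedim : IsClosed (f '' K) := isClosed_DSimage lB
  have hdcont : Continuous d := cont_d UA
  -- key: the hull maps into f '' K under d
  set Shull : Set (Matrix (Fin n) (Fin n) ℂ) := {S : Matrix (Fin n) (Fin n) ℂ |
      ∃ (k : ℕ) (t : Fin k → ℝ) (U : Fin k → Matrix (Fin n) (Fin n) ℂ),
        (∀ i, 0 ≤ t i) ∧ (∑ i, t i = 1) ∧
        (∀ i, (U i)ᴴ * U i = 1 ∧ U i * (U i)ᴴ = 1) ∧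
        S = ∑ i, (t i : ℂ) • ((U i)ᴴ * B * U i)} with hShull
  have hhull : ∀ S ∈ Shull, d S ∈ f '' K := by
    rintro S ⟨k, t, U, ht0, ht1, hUu, rfl⟩
    set W : Fin k → Matrix (Fin n) (Fin n) ℂ := fun i => UB * U i * UAᴴ with hW
    have hWu : ∀ i, (W i)ᴴ * W i = 1 ∧ W i * (W i)ᴴ = 1 := by
      intro i
      have h1 := unit_mul_aux hUB1 hUB2 (hUu i).1 (hUu i).2
      have hs := unit_ct hUA1 hUA2
      exact unit_mul_aux h1.1 h1.2 hs.1 hs.2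
    set X : Matrix (Fin n) (Fin n) ℝ :=
      Matrix.of fun p q => ∑ i, t i * Complex.normSq (W i q p) with hX
    have hXK : X ∈ K := by
      refine ⟨?_, ?_, ?_⟩
      · intro p q
        simp only [hX, Matrix.of_apply]
        exact Finset.sum_nonneg fun i _ => mul_nonneg (ht0 i) (Complex.normSq_nonneg _)
      · intro p
        simp only [hX, Matrix.of_apply]
        rw [Finset.sum_comm]
        calc ∑ i, ∑ q, t i * Complex.normSq (W i q p)
            = ∑ i, t i * ∑ q, Complex.normSq (W i q p) := by
              simp [Finset.mul_sum]
          _ = ∑ i, t i := by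
              refine Finset.sum_congr rfl fun i _ => ?_
              rw [col_normSq_sum (hWu i).1, mul_one]
          _ = 1 := ht1
      · intro q
        simp only [hX, Matrix.of_apply]
        rw [Finset.sum_comm]
        calc ∑ i, ∑ p, t i * Complex.normSq (W i q p)
            = ∑ i, t i * ∑ p, Complex.normSq (W i q p) := by
              simp [Finset.mul_sum]
          _ = ∑ i, t i := by
              refine Finset.sum_congr rfl fun i _ => ?_
              rw [row_normSq_sum (hWu i).2, mul_one]
          _ = 1 := ht1
    refine ⟨X, hXK, ?_⟩
    funext p
    have hconj : UA * (∑ i, (t i : ℂ) • ((U i)ᴴ * B * U i)) * UAᴴ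
        = ∑ i, (t i : ℂ) • ((W i)ᴴ * Matrix.diagonal (fun q => (lB q : ℂ)) * (W i)) := by
      rw [Matrix.mul_sum, Matrix.sum_mul]
      refine Finset.sum_congr rfl fun i _ => ?_
      rw [Matrix.mul_smul, Matrix.smul_mul]
      congr 1
      rw [hBdec, hW]
      simp only [conjTranspose_mul, conjTranspose_conjTranspose, Matrix.mul_assoc]
    have hentry : (f X) p = d (∑ i, (t i : ℂ) • ((U i)ᴴ * B * U i)) p := by
      simp only [hd, hconj]
      simp only [Matrix.sum_apply, Matrix.smul_apply, smul_eq_mul, Complex.re_sum,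
        Complex.re_ofReal_mul]
      have : ∀ i, t i * (((W i)ᴴ * Matrix.diagonal (fun q => (lB q : ℂ)) * (W i)) p p).re
          = ∑ q, t i * Complex.normSq (W i q p) * lB q := by
        intro i
        rw [diag_entry_re, Finset.mul_sum]
        refine Finset.sum_congr rfl fun q _ => ?_
        ring
      rw [Finset.sum_congr rfl fun i _ => this i, Finset.sum_comm]
      simp only [hf, Matrix.mulVec, dotProduct, hX, Matrix.of_apply]
      refine Finset.sum_congr rfl fun q _ => ?_
      rw [Finset.sum_mul]
    exact hentry
  have hlAdA : lA = d A := by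
    funext p
    simp only [hd, hDA]
    simp
  have hmem : d A ∈ closure (f '' K) := by
    have h1 : d A ∈ d '' closure Shull := ⟨A, hclos, rfl⟩
    have h2 := image_closure_subset_closure_image (s := Shull) hdcont
    have h3 : d '' Shull ⊆ f '' K := by
      rintro _ ⟨S, hS, rfl⟩
      exact hhull S hS
    exact closure_mono h3 (h2 h1)
  obtain ⟨X, hXK, hfX⟩ : lA ∈ f '' K := by
    rw [hlAdA]
    exact hclosedim.closure_subset hmem
  exact ⟨lA, lB, UA, UB, X, hUA1, hUA2, hUB1, hUB2, hAdec, hBdec, hXK, hfX⟩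
end
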